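/- Let σ ∈ M_n(ℂ) be positive definite with trace 1, and ρ a density matrix. Then ‖ρ - σ‖₁ ≤ 2 ‖σ^{-1/4}√ρ σ^{-1/4} - I‖_{L²(σ)}, where ‖X‖_{L²(σ)}² := Tr(σ^{1/2} X* σ^{1/2} X). -/

import Mathlib

open Matrix
open scoped ComplexOrder

/-- Real powers of a Hermitian matrix, via its spectral decomposition. -/
noncomputable def mpow {n : ℕ} {σ : Matrix (Fin n) (Fin n) ℂ} (hσ : σ.IsHermitian)
    (t : ℝ) : Matrix (Fin n) (Fin n) ℂ :=
  (hσ.eigenvectorUnitary : Matrix (Fin n) (Fin n) ℂ) *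
    Matrix.diagonal (fun i => ((hσ.eigenvalues i ^ t : ℝ) : ℂ)) *
    (star hσ.eigenvectorUnitary : Matrix (Fin n) (Fin n) ℂ)

/-- The square root of a positive semidefinite matrix (removed from Mathlib; old definition). -/
noncomputable def Matrix.PosSemidef.sqrt {n : ℕ} {A : Matrix (Fin n) (Fin n) ℂ}
    (hA : A.PosSemidef) : Matrix (Fin n) (Fin n) ℂ :=
  (hA.1.eigenvectorUnitary : Matrix (Fin n) (Fin n) ℂ) *
    Matrix.diagonal ((↑) ∘ (fun x : ℝ => Real.sqrt x) ∘ hA.1.eigenvalues) *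
    (star hA.1.eigenvectorUnitary : Matrix (Fin n) (Fin n) ℂ)

/-- The trace (Schatten-1) norm `‖A‖₁ = Tr √(A* A)`. -/
noncomputable def traceNorm {n : ℕ} (A : Matrix (Fin n) (Fin n) ℂ) : ℝ :=
  ((Matrix.posSemidef_conjTranspose_mul_self A).sqrt.trace).re

/-- The weighted `L²(σ)` (KMS) norm `‖X‖_{L²(σ)} = √(Tr (σ^{1/2} X* σ^{1/2} X))`. -/
noncomputable def l2SigmaNorm {n : ℕ} {σ : Matrix (Fin n) (Fin n) ℂ} (hσ : σ.PosDef)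
    (X : Matrix (Fin n) (Fin n) ℂ) : ℝ :=
  Real.sqrt ((mpow hσ.1 (1/2 : ℝ) * Xᴴ * mpow hσ.1 (1/2 : ℝ) * X).trace.re)


variable {n : ℕ}

/-- Frobenius norm squared via entries. -/
noncomputable def frob2 (A : Matrix (Fin n) (Fin n) ℂ) : ℝ := ∑ i, ∑ j, ‖A i j‖^2

noncomputable def frob (A : Matrix (Fin n) (Fin n) ℂ) : ℝ := Real.sqrt (frob2 A)

lemma frob2_nonneg (A : Matrix (Fin n) (Fin n) ℂ) : 0 ≤ frob2 A := by
  apply Finset.sum_nonneg; intros; apply Finset.sum_nonneg; intros; positivity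

lemma frob2_eq_trace (A : Matrix (Fin n) (Fin n) ℂ) :
    frob2 A = ((Aᴴ * A).trace).re := by
  simp only [frob2, Matrix.trace, Matrix.diag, Matrix.mul_apply, conjTranspose_apply]
  rw [Complex.re_sum]
  rw [Finset.sum_comm]
  congr 1; ext i
  rw [Complex.re_sum]
  congr 1; ext j
  rw [Complex.star_def, ← Complex.normSq_eq_conj_mul_self]
  simp [Complex.normSq_eq_norm_sq, ← Complex.ofReal_pow]

lemma trace_mul_le_frob (A B : Matrix (Fin n) (Fin n) ℂ) :
    ‖(A * B).trace‖ ≤ frob A * frob B := by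
  have h1 : (A * B).trace = ∑ p : Fin n × Fin n, A p.1 p.2 * B p.2 p.1 := by
    rw [Matrix.trace]
    simp only [Matrix.diag, Matrix.mul_apply]
    rw [← Finset.sum_product']
    rfl
  rw [h1]
  calc ‖∑ p : Fin n × Fin n, A p.1 p.2 * B p.2 p.1‖
      ≤ ∑ p : Fin n × Fin n, ‖A p.1 p.2‖ * ‖B p.2 p.1‖ := by
        simpa using norm_sum_le Finset.univ (fun p : Fin n × Fin n => A p.1 p.2 * B p.2 p.1)
    _ ≤ Real.sqrt (∑ p : Fin n × Fin n, ‖A p.1 p.2‖^2) *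
        Real.sqrt (∑ p : Fin n × Fin n, ‖B p.2 p.1‖^2) :=
        Real.sum_mul_le_sqrt_mul_sqrt _ _ _
    _ = frob A * frob B := by
        congr 1
        · rw [frob, frob2, ← Finset.sum_product']; rfl
        · rw [frob, frob2, ← Finset.sum_product']
          congr 1
          exact Fintype.sum_equiv (Equiv.prodComm _ _) _ _ (fun p => rfl)

section cdiag
variable {M : Matrix (Fin n) (Fin n) ℂ} (hM : M.IsHermitian)

/-- Conjugated diagonal matrix w.r.t. the eigenbasis of `M`. -/
noncomputable def cdiag (f : Fin n → ℝ) : Matrix (Fin n) (Fin n) ℂ :=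
  (hM.eigenvectorUnitary : Matrix (Fin n) (Fin n) ℂ) *
    Matrix.diagonal (fun i => ((f i : ℝ) : ℂ)) *
    (star hM.eigenvectorUnitary : Matrix (Fin n) (Fin n) ℂ)

lemma star_mul_self_eigU :
    (star hM.eigenvectorUnitary : Matrix (Fin n) (Fin n) ℂ) *
      (hM.eigenvectorUnitary : Matrix (Fin n) (Fin n) ℂ) = 1 :=
  (Matrix.mem_unitaryGroup_iff').mp hM.eigenvectorUnitary.2

lemma self_mul_star_eigU :
    (hM.eigenvectorUnitary : Matrix (Fin n) (Fin n) ℂ) *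
      (star hM.eigenvectorUnitary : Matrix (Fin n) (Fin n) ℂ) = 1 :=
  (Matrix.mem_unitaryGroup_iff).mp hM.eigenvectorUnitary.2

lemma diag_real_ct (f : Fin n → ℝ) :
    (Matrix.diagonal (fun i => ((f i : ℝ) : ℂ)))ᴴ =
      Matrix.diagonal (fun i => ((f i : ℝ) : ℂ)) := by
  rw [Matrix.diagonal_conjTranspose]
  have h2 : (star fun i => ((f i : ℝ) : ℂ)) = fun i => ((f i : ℝ) : ℂ) := by
    funext i
    exact Complex.conj_ofReal (f i)
  rw [h2]

lemma cdiag_mul (f g : Fin n → ℝ) :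
    cdiag hM f * cdiag hM g = cdiag hM (fun i => f i * g i) := by
  unfold cdiag
  simp only [Matrix.mul_assoc]
  rw [← Matrix.mul_assoc (star hM.eigenvectorUnitary : Matrix (Fin n) (Fin n) ℂ)
    (hM.eigenvectorUnitary : Matrix (Fin n) (Fin n) ℂ), star_mul_self_eigU hM, Matrix.one_mul,
    ← Matrix.mul_assoc (Matrix.diagonal _) (Matrix.diagonal _), Matrix.diagonal_mul_diagonal]
  have h2 : (fun i => ((f i : ℝ) : ℂ) * ((g i : ℝ) : ℂ)) =
      (fun i => (((fun i => f i * g i) i : ℝ) : ℂ)) := by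
    funext i; push_cast; ring
  rw [h2]

lemma cdiag_one : cdiag hM (fun _ => 1) = 1 := by
  unfold cdiag
  simp [self_mul_star_eigU hM]

lemma cdiag_conjTranspose (f : Fin n → ℝ) : (cdiag hM f)ᴴ = cdiag hM f := by
  unfold cdiag
  simp only [conjTranspose_mul, conjTranspose_conjTranspose, diag_real_ct,
    Matrix.star_eq_conjTranspose, Matrix.mul_assoc]

lemma cdiag_trace (f : Fin n → ℝ) : (cdiag hM f).trace = ∑ i, ((f i : ℝ) : ℂ) := by
  unfold cdiag
  rw [Matrix.trace_mul_cycle, star_mul_self_eigU hM, Matrix.one_mul, Matrix.trace_diagonal]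

lemma cdiag_posSemidef {f : Fin n → ℝ} (hf : ∀ i, 0 ≤ f i) : (cdiag hM f).PosSemidef := by
  have key : cdiag hM f =
      ((Matrix.diagonal fun i => ((Real.sqrt (f i) : ℝ) : ℂ)) *
        (star hM.eigenvectorUnitary : Matrix (Fin n) (Fin n) ℂ))ᴴ *
      ((Matrix.diagonal fun i => ((Real.sqrt (f i) : ℝ) : ℂ)) *
        (star hM.eigenvectorUnitary : Matrix (Fin n) (Fin n) ℂ)) := by
    simp only [conjTranspose_mul, conjTranspose_conjTranspose, diag_real_ct,
      Matrix.star_eq_conjTranspose, cdiag, Matrix.mul_assoc]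
    congr 1
    rw [← Matrix.mul_assoc (Matrix.diagonal _) (Matrix.diagonal _), Matrix.diagonal_mul_diagonal]
    have h2 : (fun i => ((Real.sqrt (f i) : ℝ) : ℂ) * ((Real.sqrt (f i) : ℝ) : ℂ)) =
        (fun i => ((f i : ℝ) : ℂ)) := by
      funext i; rw [← Complex.ofReal_mul, Real.mul_self_sqrt (hf i)]
    rw [h2]
  rw [key]
  exact Matrix.posSemidef_conjTranspose_mul_self _

lemma spectral_cdiag : M = cdiag hM hM.eigenvalues := hM.spectral_theorem

end cdiag

open scoped MatrixOrder in
lemma psd_eq_of_mul_self {A B : Matrix (Fin n) (Fin n) ℂ} (hA : A.PosSemidef)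
    (hB : B.PosSemidef) (h : A * A = B * B) : A = B :=
  (CFC.mul_self_eq_mul_self_iff A B hA.nonneg hB.nonneg).mp h

lemma psqrt_eq_cdiag {A : Matrix (Fin n) (Fin n) ℂ} (hA : A.PosSemidef) :
    hA.sqrt = cdiag hA.1 (fun i => Real.sqrt (hA.1.eigenvalues i)) := rfl

lemma Matrix.PosSemidef.posSemidef_sqrt {A : Matrix (Fin n) (Fin n) ℂ} (hA : A.PosSemidef) :
    hA.sqrt.PosSemidef := by
  rw [psqrt_eq_cdiag]; exact cdiag_posSemidef hA.1 (fun i => Real.sqrt_nonneg _)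

lemma Matrix.PosSemidef.sqrt_mul_self {A : Matrix (Fin n) (Fin n) ℂ} (hA : A.PosSemidef) :
    hA.sqrt * hA.sqrt = A := by
  rw [psqrt_eq_cdiag, cdiag_mul]
  have e : (fun i => Real.sqrt (hA.1.eigenvalues i) * Real.sqrt (hA.1.eigenvalues i)) =
      hA.1.eigenvalues := by
    funext i; exact Real.mul_self_sqrt (hA.eigenvalues_nonneg i)
  rw [e]; exact (spectral_cdiag hA.1).symm

lemma Matrix.PosSemidef.eq_sqrt_of_sq_eq {A B : Matrix (Fin n) (Fin n) ℂ} (hA : A.PosSemidef)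
    (hB : B.PosSemidef) (h : A ^ 2 = B) : A = hB.sqrt :=
  psd_eq_of_mul_self hA hB.posSemidef_sqrt (by rw [hB.sqrt_mul_self, ← h, pow_two])

section mpowlem
variable {σ : Matrix (Fin n) (Fin n) ℂ} (hσ : σ.PosDef)

lemma mpow_eq_cdiag (t : ℝ) :
    mpow hσ.1 t = cdiag hσ.1 (fun i => hσ.1.eigenvalues i ^ t) := by
  unfold mpow cdiag
  rfl

lemma mpow_mul_mpow (a b : ℝ) :
    mpow hσ.1 a * mpow hσ.1 b = mpow hσ.1 (a + b) := by
  rw [mpow_eq_cdiag hσ, mpow_eq_cdiag hσ, mpow_eq_cdiag hσ, cdiag_mul]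
  refine congrArg (cdiag hσ.1) ?_
  funext i
  exact (Real.rpow_add (hσ.eigenvalues_pos i) a b).symm

lemma mpow_zero : mpow hσ.1 (0 : ℝ) = 1 := by
  rw [mpow_eq_cdiag hσ]
  have h2 : (fun i => hσ.1.eigenvalues i ^ (0:ℝ)) = fun _ : Fin n => (1:ℝ) := by
    funext i; exact Real.rpow_zero _
  rw [h2, cdiag_one]

lemma mpow_one' : mpow hσ.1 (1 : ℝ) = σ := by
  rw [mpow_eq_cdiag hσ]
  have h2 : (fun i => hσ.1.eigenvalues i ^ (1:ℝ)) = hσ.1.eigenvalues := by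
    funext i; exact Real.rpow_one _
  rw [h2]
  exact (spectral_cdiag hσ.1).symm

lemma mpow_herm (t : ℝ) : (mpow hσ.1 t)ᴴ = mpow hσ.1 t := cdiag_conjTranspose _ _

end mpowlem

lemma traceNorm_core (a b : Matrix (Fin n) (Fin n) ℂ) (haH : aᴴ = a) (hbH : bᴴ = b) :
    traceNorm (a * a - b * b) ≤ frob (a - b) * frob (a + b) := by
  classical
  set M := a * a - b * b with hMdef
  have hM : M.IsHermitian := by
    show Mᴴ = M
    rw [hMdef]
    simp [conjTranspose_sub, conjTranspose_mul, haH, hbH]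
  set μ := hM.eigenvalues with hμ
  set s : Fin n → ℝ := fun i => if μ i < 0 then -1 else 1 with hs
  set W := cdiag hM s with hW
  set D := a - b with hD
  set E := a + b with hE
  have hWH : Wᴴ = W := cdiag_conjTranspose hM s
  have hss : (fun i => s i * s i) = fun _ : Fin n => (1:ℝ) := by
    funext i; rw [hs]; dsimp only; split <;> norm_num
  have hWW : W * W = 1 := by rw [hW, cdiag_mul, hss, cdiag_one]
  have habs : (fun i => μ i * s i) = fun i => |μ i| := by
    funext i; rw [hs]; dsimp only
    by_cases h : μ i < 0
    · rw [if_pos h, abs_of_neg h]; ring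
    · rw [if_neg h, abs_of_nonneg (not_lt.mp h)]; ring
  have htn : traceNorm M = ∑ i, |μ i| := by
    have hsq : cdiag hM (fun i => |μ i|) = (Matrix.posSemidef_conjTranspose_mul_self M).sqrt := by
      apply Matrix.PosSemidef.eq_sqrt_of_sq_eq (cdiag_posSemidef hM (fun i => abs_nonneg _))
      rw [pow_two, cdiag_mul]
      have e : (fun i => |μ i| * |μ i|) = fun i => μ i * μ i := by
        funext i; exact abs_mul_abs_self _
      rw [e, show Mᴴ = M from hM]
      conv_rhs => rw [spectral_cdiag hM]
      rw [cdiag_mul]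
    unfold traceNorm
    rw [← hsq, cdiag_trace, Complex.re_sum]
    simp
  have hMW : ((M * W).trace).re = ∑ i, |μ i| := by
    have e : M * W = cdiag hM (fun i => μ i * s i) := by
      conv_lhs => rw [spectral_cdiag hM]
      rw [hW, cdiag_mul]
    rw [e, habs, cdiag_trace, Complex.re_sum]
    simp
  have hMM : D * E + E * D = M + M := by rw [hMdef, hD, hE]; noncomm_ring
  have h2 : (M*W).trace + (M*W).trace = (D * (E*W)).trace + (D * (W*E)).trace := by
    have e1 : M*W + M*W = D*(E*W) + E*D*W := by
      calc M*W + M*W = (M + M) * W := by rw [add_mul]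
        _ = (D*E + E*D) * W := by rw [hMM]
        _ = D*(E*W) + E*D*W := by noncomm_ring
    rw [← Matrix.trace_add, e1, Matrix.trace_add]
    congr 1
    rw [Matrix.trace_mul_cycle E D W, ← Matrix.mul_assoc, Matrix.trace_mul_comm,
      ← Matrix.mul_assoc]
  have frobEW : frob (E*W) = frob E := by
    rw [frob, frob, frob2_eq_trace, frob2_eq_trace]
    have e : ((E*W)ᴴ * (E*W)).trace = (Eᴴ*E).trace := by
      rw [conjTranspose_mul, hWH, Matrix.trace_mul_comm]
      have e3 : (E*W)*(W*Eᴴ) = E*(W*W)*Eᴴ := by noncomm_ring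
      rw [e3, hWW, Matrix.mul_one, Matrix.trace_mul_comm]
    rw [e]
  have frobWE : frob (W*E) = frob E := by
    rw [frob, frob, frob2_eq_trace, frob2_eq_trace]
    have e : ((W*E)ᴴ * (W*E)).trace = (Eᴴ*E).trace := by
      rw [conjTranspose_mul, hWH]
      have e3 : (Eᴴ*W)*(W*E) = Eᴴ*(W*W)*E := by noncomm_ring
      rw [e3, hWW, Matrix.mul_one]
    rw [e]
  have bound1 : ‖(D*(E*W)).trace‖ ≤ frob D * frob E := frobEW ▸ trace_mul_le_frob D (E*W)
  have bound2 : ‖(D*(W*E)).trace‖ ≤ frob D * frob E := frobWE ▸ trace_mul_le_frob D (W*E)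
  have key : traceNorm M + traceNorm M ≤ frob D * frob E + frob D * frob E := by
    rw [htn, ← hMW]
    calc ((M * W).trace).re + ((M * W).trace).re
        = ((M*W).trace + (M*W).trace).re := by rw [Complex.add_re]
      _ = ((D * (E*W)).trace + (D * (W*E)).trace).re := by rw [h2]
      _ ≤ ‖(D * (E*W)).trace + (D * (W*E)).trace‖ := Complex.re_le_norm _
      _ ≤ ‖(D * (E*W)).trace‖ + ‖(D * (W*E)).trace‖ := norm_add_le _ _
      _ ≤ frob D * frob E + frob D * frob E := add_le_add bound1 bound2
  linarith

/-- For a full-rank density matrix `σ` and density matrix `ρ`,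
`‖ρ - σ‖₁ ≤ 2 ‖σ^{-1/4} √ρ σ^{-1/4} - I‖_{L²(σ)}`. -/
theorem traceNorm_sub_le_two_mul_l2SigmaNorm {n : ℕ} (σ ρ : Matrix (Fin n) (Fin n) ℂ)
    (hσ : σ.PosDef) (hσtr : σ.trace = 1) (hρ : ρ.PosSemidef) (hρtr : ρ.trace = 1) :
    traceNorm (ρ - σ) ≤
      2 * l2SigmaNorm hσ (mpow hσ.1 (-(1/4) : ℝ) * hρ.sqrt * mpow hσ.1 (-(1/4) : ℝ) - 1) := by
  classical
  set a := hρ.sqrt with ha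
  set b := mpow hσ.1 (1/2 : ℝ) with hb
  set Q := mpow hσ.1 (1/4 : ℝ) with hQdef
  set Qi := mpow hσ.1 (-(1/4) : ℝ) with hQidef
  set X := Qi * a * Qi - 1 with hX
  have haH : aᴴ = a := hρ.posSemidef_sqrt.1
  have haa : a * a = ρ := hρ.sqrt_mul_self
  have hbH : bᴴ = b := by rw [hb]; exact mpow_herm hσ _
  have hQiH : Qiᴴ = Qi := by rw [hQidef]; exact mpow_herm hσ _
  have hbb : b * b = σ := by
    rw [hb, mpow_mul_mpow hσ]
    norm_num [mpow_one' hσ]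
  have hQQ : Q * Q = b := by
    rw [hQdef, hb, mpow_mul_mpow hσ]
    norm_num
  have hQQi : Q * Qi = 1 := by
    rw [hQdef, hQidef, mpow_mul_mpow hσ]
    norm_num [mpow_zero hσ]
  have hQiQ : Qi * Q = 1 := by
    rw [hQdef, hQidef, mpow_mul_mpow hσ]
    norm_num [mpow_zero hσ]
  have hXH : Xᴴ = X := by
    rw [hX]
    simp only [conjTranspose_sub, conjTranspose_mul, conjTranspose_one, haH, hQiH,
      Matrix.mul_assoc]
  have hQXQ : Q * X * Q = a - b := by
    have expand : Q * (Qi * a * Qi - 1) * Q = (Q * Qi) * a * (Qi * Q) - Q * Q := by noncomm_ring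
    rw [hX, expand, hQQi, hQiQ, hQQ, Matrix.one_mul, Matrix.mul_one]
  have hDH : (a - b)ᴴ = a - b := by rw [conjTranspose_sub, haH, hbH]
  -- l2 norm equals Frobenius norm of a - b
  have hl2 : l2SigmaNorm hσ X = frob (a - b) := by
    unfold l2SigmaNorm frob
    congr 1
    rw [← hb, hXH]
    have e1 : b * X * b * X = Q * ((Q * X * Q) * (Q * X)) := by rw [← hQQ]; noncomm_ring
    rw [e1, Matrix.trace_mul_comm]
    have e2 : ((Q * X * Q) * (Q * X)) * Q = (Q*X*Q) * (Q*X*Q) := by noncomm_ring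
    rw [e2, hQXQ]
    rw [frob2_eq_trace, hDH]
  -- Frobenius norms of a and b are 1
  have hfa : frob a = 1 := by
    rw [frob, frob2_eq_trace, haH, haa, hρtr]
    simp
  have hfb : frob b = 1 := by
    rw [frob, frob2_eq_trace, hbH, hbb, hσtr]
    simp
  -- frob (a + b) ≤ 2
  have hfE : frob (a + b) ≤ 2 := by
    have eE : (a+b)ᴴ*(a+b) = a*a + b*b + (a*b + b*a) := by
      rw [conjTranspose_add, haH, hbH]; noncomm_ring
    have htr : frob2 (a+b) = ρ.trace.re + σ.trace.re + ((a*b).trace.re + (b*a).trace.re) := by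
      rw [frob2_eq_trace, eE, Matrix.trace_add, Matrix.trace_add, Matrix.trace_add, haa, hbb]
      simp [Complex.add_re]
    have hab : (a*b).trace.re ≤ 1 := by
      calc (a*b).trace.re ≤ ‖(a*b).trace‖ := Complex.re_le_norm _
        _ ≤ frob a * frob b := trace_mul_le_frob a b
        _ = 1 := by rw [hfa, hfb]; norm_num
    have hba : (b*a).trace.re ≤ 1 := by
      calc (b*a).trace.re ≤ ‖(b*a).trace‖ := Complex.re_le_norm _
        _ ≤ frob b * frob a := trace_mul_le_frob b a
        _ = 1 := by rw [hfa, hfb]; norm_num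
    have h4 : frob2 (a+b) ≤ 4 := by
      rw [htr, hρtr, hσtr]
      simp only [Complex.one_re]
      linarith
    calc frob (a+b) ≤ Real.sqrt 4 := Real.sqrt_le_sqrt h4
      _ = 2 := by
        rw [show (4:ℝ) = 2^2 by norm_num, Real.sqrt_sq (by norm_num : (0:ℝ) ≤ 2)]
  -- main estimate
  have hcore : traceNorm (ρ - σ) ≤ frob (a - b) * frob (a + b) := by
    have : ρ - σ = a * a - b * b := by rw [haa, hbb]
    rw [this]
    exact traceNorm_core a b haH hbH
  have hfrobD : 0 ≤ frob (a - b) := Real.sqrt_nonneg _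
  calc traceNorm (ρ - σ) ≤ frob (a - b) * frob (a + b) := hcore
    _ ≤ frob (a - b) * 2 := mul_le_mul_of_nonneg_left hfE hfrobD
    _ = 2 * frob (a - b) := by ring
    _ = 2 * l2SigmaNorm hσ X := by rw [hl2]
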